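/- If A is a real n×n matrix with nonnegative off-diagonal entries, then there exists a nonzero vector v with all components nonnegative such that A v = s(A) v, where s(A) is the spectral bound of A. -/

import Mathlib

open Matrix Finset


variable {n : ℕ}

/-- The standard simplex is compact. -/
lemma simplex_compact (n : ℕ) :
    IsCompact {x : Fin n → ℝ | (∀ i, 0 ≤ x i) ∧ ∑ i, x i = 1} := by
  have hsub : {x : Fin n → ℝ | (∀ i, 0 ≤ x i) ∧ ∑ i, x i = 1} ⊆
      Set.pi Set.univ (fun _ : Fin n => Set.Icc (0:ℝ) 1) := by
    rintro x ⟨h0, h1⟩ i _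
    refine ⟨h0 i, ?_⟩
    calc x i ≤ ∑ j, x j := Finset.single_le_sum (fun j _ => h0 j) (mem_univ i)
    _ = 1 := h1
  have hcomp : IsCompact (Set.pi Set.univ (fun _ : Fin n => Set.Icc (0:ℝ) 1)) :=
    isCompact_univ_pi (fun _ => isCompact_Icc)
  refine hcomp.of_isClosed_subset ?_ hsub
  have h1 : IsClosed {x : Fin n → ℝ | ∀ i, 0 ≤ x i} := by
    have : {x : Fin n → ℝ | ∀ i, 0 ≤ x i} = ⋂ i, {x | 0 ≤ x i} := by
      ext x; simp
    rw [this]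
    exact isClosed_iInter fun i => isClosed_le continuous_const (continuous_apply i)
  have h2 : IsClosed {x : Fin n → ℝ | ∑ i, x i = 1} :=
    isClosed_eq (by continuity) continuous_const
  have : {x : Fin n → ℝ | (∀ i, 0 ≤ x i) ∧ ∑ i, x i = 1}
      = {x : Fin n → ℝ | ∀ i, 0 ≤ x i} ∩ {x : Fin n → ℝ | ∑ i, x i = 1} := rfl
  rw [this]
  exact h1.inter h2

lemma mulVec_nonneg {B : Matrix (Fin n) (Fin n) ℝ} (hB : ∀ i j, 0 ≤ B i j)
    {x : Fin n → ℝ} (hx : ∀ i, 0 ≤ x i) (i : Fin n) : 0 ≤ B.mulVec x i := by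
  simp only [Matrix.mulVec, dotProduct]
  exact Finset.sum_nonneg fun j _ => mul_nonneg (hB i j) (hx j)

lemma mulVec_pos {B : Matrix (Fin n) (Fin n) ℝ} (hB : ∀ i j, 0 < B i j)
    {x : Fin n → ℝ} (hx : ∀ i, 0 ≤ x i) {j₀ : Fin n} (hj₀ : 0 < x j₀) (i : Fin n) :
    0 < B.mulVec x i := by
  simp only [Matrix.mulVec, dotProduct]
  have : 0 < B i j₀ * x j₀ := mul_pos (hB i j₀) hj₀
  refine lt_of_lt_of_le this ?_
  exact Finset.single_le_sum (fun j _ => mul_nonneg (hB i j).le (hx j)) (mem_univ j₀)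

lemma pos_perron (hn : 0 < n) (B : Matrix (Fin n) (Fin n) ℝ) (hB : ∀ i j, 0 < B i j) :
    ∃ (x : Fin n → ℝ) (lam : ℝ),
      (∀ i, 0 < x i) ∧ (∑ i, x i = 1) ∧ B.mulVec x = lam • x ∧
      ∀ (y : Fin n → ℝ) (t : ℝ), (∀ i, 0 ≤ y i) → (∃ j, 0 < y j) →
        (∀ i, t * y i ≤ B.mulVec y i) → t ≤ lam := by
  haveI : Nonempty (Fin n) := ⟨⟨0, hn⟩⟩
  set Δ : Set (Fin n → ℝ) := {x : Fin n → ℝ | (∀ i, 0 ≤ x i) ∧ ∑ i, x i = 1} with hΔ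
  set T : Set ℝ := {t : ℝ | ∃ x ∈ Δ, ∀ i, t * x i ≤ B.mulVec x i} with hT
  -- unit vector in Δ
  have huΔ : (fun _ : Fin n => (n : ℝ)⁻¹) ∈ Δ := by
    constructor
    · intro i; positivity
    · simp only [Finset.sum_const, Finset.card_univ, Fintype.card_fin, nsmul_eq_mul]
      field_simp
  have hT0 : (0 : ℝ) ∈ T := by
    refine ⟨_, huΔ, fun i => ?_⟩
    rw [zero_mul]
    exact mulVec_nonneg (fun i j => (hB i j).le) (fun i => by positivity) i
  have hTne : T.Nonempty := ⟨0, hT0⟩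
  have hTbdd : BddAbove T := by
    refine ⟨∑ i, ∑ j, B i j, fun t ht => ?_⟩
    obtain ⟨x, ⟨hx0, hx1⟩, hineq⟩ := ht
    have hx_le_one : ∀ j, x j ≤ 1 := fun j => by
      calc x j ≤ ∑ k, x k := Finset.single_le_sum (fun k _ => hx0 k) (mem_univ j)
      _ = 1 := hx1
    calc t = t * ∑ i, x i := by rw [hx1, mul_one]
    _ = ∑ i, t * x i := by rw [Finset.mul_sum]
    _ ≤ ∑ i, B.mulVec x i := Finset.sum_le_sum fun i _ => hineq i
    _ = ∑ i, ∑ j, B i j * x j := rfl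
    _ ≤ ∑ i, ∑ j, B i j := by
        refine Finset.sum_le_sum fun i _ => Finset.sum_le_sum fun j _ => ?_
        calc B i j * x j ≤ B i j * 1 := by
              exact mul_le_mul_of_nonneg_left (hx_le_one j) (hB i j).le
        _ = B i j := mul_one _
  set lam : ℝ := sSup T with hlam
  -- attainment via compactness
  have hseq : ∀ k : ℕ, ∃ x ∈ Δ, ∀ i, (lam - 1/(k+1)) * x i ≤ B.mulVec x i := by
    intro k
    have hlt : lam - 1/(k+1) < lam := by
      have : (0:ℝ) < 1/(k+1) := by positivity
      linarith
    obtain ⟨t, htT, htlt⟩ := exists_lt_of_lt_csSup hTne hlt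
    obtain ⟨x, hxΔ, hx⟩ := htT
    exact ⟨x, hxΔ, fun i => le_trans
      (mul_le_mul_of_nonneg_right htlt.le (hxΔ.1 i)) (hx i)⟩
  choose xs hxsΔ hxs using hseq
  obtain ⟨x, hxΔ, φ, hφmono, hφtend⟩ := (simplex_compact n).tendsto_subseq hxsΔ
  have hkey : ∀ i, lam * x i ≤ B.mulVec x i := by
    intro i
    have htx : Filter.Tendsto (fun k => xs (φ k) i) Filter.atTop (nhds (x i)) := by
      have := hφtend
      rw [tendsto_pi_nhds] at this
      exact this i
    have htend1 : Filter.Tendsto (fun k => (lam - 1/(φ k + 1)) * xs (φ k) i)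
        Filter.atTop (nhds (lam * x i)) := by
      have h1 : Filter.Tendsto (fun k => (1:ℝ)/(φ k + 1)) Filter.atTop (nhds 0) := by
        have := (tendsto_one_div_add_atTop_nhds_zero_nat (𝕜 := ℝ)).comp hφmono.tendsto_atTop
        simpa [Function.comp_def] using this
      have h2 : Filter.Tendsto (fun k => lam - 1/(φ k + 1)) Filter.atTop (nhds lam) := by
        simpa using Filter.Tendsto.const_sub lam h1
      simpa using h2.mul htx
    have htend2 : Filter.Tendsto (fun k => B.mulVec (xs (φ k)) i)
        Filter.atTop (nhds (B.mulVec x i)) := by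
      simp only [Matrix.mulVec, dotProduct]
      refine tendsto_finset_sum _ fun j _ => ?_
      have : Filter.Tendsto (fun k => xs (φ k) j) Filter.atTop (nhds (x j)) := by
        have := hφtend; rw [tendsto_pi_nhds] at this; exact this j
      exact this.const_mul _
    exact le_of_tendsto_of_tendsto' htend1 htend2 fun k => hxs (φ k) i
  obtain ⟨hx0, hx1⟩ := hxΔ
  obtain ⟨j₀, hj₀⟩ : ∃ j₀, 0 < x j₀ := by
    by_contra h
    push_neg at h
    have : ∑ i, x i = 0 := le_antisymm (Finset.sum_nonpos fun i _ => h i)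
      (Finset.sum_nonneg fun i _ => hx0 i)
    rw [hx1] at this; norm_num at this
  -- equality
  have heig : B.mulVec x = lam • x := by
    by_contra hne
    set w : Fin n → ℝ := B.mulVec x - lam • x with hw
    have hw0 : ∀ i, 0 ≤ w i := fun i => by
      simp only [hw, Pi.sub_apply, Pi.smul_apply, smul_eq_mul, sub_nonneg]
      exact hkey i
    have hwne : ∃ j, 0 < w j := by
      by_contra h
      push_neg at h
      apply hne
      funext i
      have := le_antisymm (h i) (hw0 i)
      simp only [hw, Pi.sub_apply, Pi.smul_apply, smul_eq_mul] at this
      simp only [Pi.smul_apply, smul_eq_mul]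
      linarith
    obtain ⟨j₁, hj₁⟩ := hwne
    set y : Fin n → ℝ := B.mulVec x with hy
    have hy0 : ∀ i, 0 < y i := fun i => mulVec_pos hB hx0 hj₀ i
    have hBw : ∀ i, 0 < B.mulVec w i := fun i => mulVec_pos hB hw0 hj₁ i
    have hBy : ∀ i, B.mulVec y i = lam * y i + B.mulVec w i := by
      intro i
      have : y = lam • x + w := by simp [hy, hw]
      rw [show B.mulVec y i = B.mulVec (lam • x + w) i from by rw [← this]]
      rw [Matrix.mulVec_add, Matrix.mulVec_smul]
      simp only [Pi.add_apply, Pi.smul_apply, smul_eq_mul]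
      rfl
    set δ : ℝ := Finset.univ.inf' Finset.univ_nonempty (fun i => B.mulVec w i / y i) with hδ
    have hδpos : 0 < δ := by
      rw [hδ, Finset.lt_inf'_iff]
      exact fun i _ => div_pos (hBw i) (hy0 i)
    have hinc : ∀ i, (lam + δ) * y i ≤ B.mulVec y i := by
      intro i
      have hδle : δ ≤ B.mulVec w i / y i := Finset.inf'_le _ (mem_univ i)
      have : δ * y i ≤ B.mulVec w i := by
        rw [← le_div_iff₀ (hy0 i)] at *
        exact hδle
      rw [hBy i]; nlinarith [hy0 i]
    -- normalize y
    set S : ℝ := ∑ i, y i with hS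
    have hSpos : 0 < S := Finset.sum_pos (fun i _ => hy0 i) univ_nonempty
    have hmem : lam + δ ∈ T := by
      refine ⟨S⁻¹ • y, ⟨fun i => by
        simp only [Pi.smul_apply, smul_eq_mul]
        exact mul_nonneg (inv_nonneg.mpr hSpos.le) (hy0 i).le, ?_⟩, fun i => ?_⟩
      · simp only [Pi.smul_apply, smul_eq_mul, ← Finset.mul_sum, ← hS]
        field_simp
      · have := hinc i
        have h2 : B.mulVec (S⁻¹ • y) i = S⁻¹ * B.mulVec y i := by
          rw [Matrix.mulVec_smul]; simp
        rw [h2]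
        simp only [Pi.smul_apply, smul_eq_mul]
        rw [mul_left_comm]
        exact mul_le_mul_of_nonneg_left this (by positivity)
    have := le_csSup hTbdd hmem
    rw [← hlam] at this
    linarith
  -- positivity of x and lam
  have hypos : ∀ i, 0 < lam * x i := by
    intro i
    have := mulVec_pos hB hx0 hj₀ i
    rw [heig] at this
    simpa using this
  have hxpos : ∀ i, 0 < x i := by
    intro i
    rcases lt_or_eq_of_le (hx0 i) with h | h
    · exact h
    · exfalso; have := hypos i; rw [← h, mul_zero] at this; exact lt_irrefl _ this
  refine ⟨x, lam, hxpos, hx1, heig, ?_⟩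
  -- Collatz-Wielandt upper bound
  intro y t hy0 ⟨j, hj⟩ hty
  set α : ℝ := Finset.univ.sup' Finset.univ_nonempty (fun i => y i / x i) with hα
  have hαpos : 0 < α := by
    have : y j / x j ≤ α := by rw [hα]; exact Finset.le_sup' (fun i => y i / x i) (mem_univ j)
    have h2 : 0 < y j / x j := div_pos hj (hxpos j)
    linarith
  have hyle : ∀ i, y i ≤ α * x i := by
    intro i
    have : y i / x i ≤ α := by rw [hα]; exact Finset.le_sup' (fun i => y i / x i) (mem_univ i)
    rw [div_le_iff₀ (hxpos i)] at this
    linarith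
  obtain ⟨i₀, -, hi₀⟩ := Finset.exists_mem_eq_sup' Finset.univ_nonempty (fun i => y i / x i)
  have hyi₀ : y i₀ = α * x i₀ := by
    rw [hα, hi₀]
    exact (div_mul_cancel₀ _ (hxpos i₀).ne').symm
  have hchain : t * y i₀ ≤ lam * y i₀ := by
    calc t * y i₀ ≤ B.mulVec y i₀ := hty i₀
    _ = ∑ k, B i₀ k * y k := rfl
    _ ≤ ∑ k, B i₀ k * (α * x k) := by
        exact Finset.sum_le_sum fun k _ => mul_le_mul_of_nonneg_left (hyle k) (hB i₀ k).le
    _ = α * B.mulVec x i₀ := by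
        simp only [Matrix.mulVec, dotProduct, Finset.mul_sum]; congr 1; funext k; ring
    _ = α * (lam * x i₀) := by rw [heig]; simp
    _ = lam * (α * x i₀) := by ring
    _ = lam * y i₀ := by rw [hyi₀]
  have hyi₀pos : 0 < y i₀ := by rw [hyi₀]; exact mul_pos hαpos (hxpos i₀)
  exact le_of_mul_le_mul_right (by linarith [hchain]) hyi₀pos

lemma nonneg_perron (hn : 0 < n) (B : Matrix (Fin n) (Fin n) ℝ)
    (hB : ∀ i j, 0 ≤ B i j) (r : ℝ) (y : Fin n → ℝ) (hy0 : ∀ i, 0 ≤ y i)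
    (hyne : ∃ j, 0 < y j) (hry : ∀ i, r * y i ≤ B.mulVec y i) :
    ∃ (x : Fin n → ℝ) (lam : ℝ),
      (∀ i, 0 ≤ x i) ∧ (∑ i, x i = 1) ∧ B.mulVec x = lam • x ∧ r ≤ lam := by
  haveI : Nonempty (Fin n) := ⟨⟨0, hn⟩⟩
  -- perturbed matrices
  set Bp : ℕ → Matrix (Fin n) (Fin n) ℝ :=
    fun k => Matrix.of (fun i j => B i j + 1/(k+1)) with hBp
  have hBppos : ∀ k i j, 0 < Bp k i j := fun k i j => by
    have : (0:ℝ) < 1/(k+1) := by positivity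
    simp only [hBp, Matrix.of_apply]
    linarith [hB i j]
  have hstep : ∀ k : ℕ, ∃ (x : Fin n → ℝ) (lam : ℝ),
      (∀ i, 0 ≤ x i) ∧ (∑ i, x i = 1) ∧ (Bp k).mulVec x = lam • x ∧
      r ≤ lam ∧ lam ≤ (∑ i, ∑ j, B i j) + n * n := by
    intro k
    obtain ⟨x, lam, hxpos, hx1, heig, hcw⟩ := pos_perron hn (Bp k) (hBppos k)
    refine ⟨x, lam, fun i => (hxpos i).le, hx1, heig, ?_, ?_⟩
    · -- r ≤ lam via Collatz-Wielandt applied to y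
      refine hcw y r hy0 hyne fun i => ?_
      refine le_trans (hry i) ?_
      simp only [Matrix.mulVec, dotProduct, hBp, Matrix.of_apply]
      refine Finset.sum_le_sum fun j _ => ?_
      have : (0:ℝ) < 1/(k+1) := by positivity
      nlinarith [hy0 j]
    · -- upper bound on lam
      have hx_le_one : ∀ j, x j ≤ 1 := fun j => by
        calc x j ≤ ∑ i, x i := Finset.single_le_sum (fun i _ => (hxpos i).le) (mem_univ j)
        _ = 1 := hx1
      have h1 : lam = ∑ i, (Bp k).mulVec x i := by
        have : ∑ i, (Bp k).mulVec x i = ∑ i, lam * x i := by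
          rw [heig]; simp [Finset.sum_congr]
        rw [this, ← Finset.mul_sum, hx1, mul_one]
      rw [h1]
      calc ∑ i, (Bp k).mulVec x i = ∑ i, ∑ j, (B i j + 1/(k+1)) * x j := rfl
      _ ≤ ∑ i, ∑ j, (B i j + 1) := by
          refine Finset.sum_le_sum fun i _ => Finset.sum_le_sum fun j _ => ?_
          have h1k : (0:ℝ) < 1/(k+1) := by positivity
          have h1k' : (1:ℝ)/(k+1) ≤ 1 := by
            rw [div_le_one (by positivity)]; linarith [Nat.cast_nonneg (α := ℝ) k]
          nlinarith [hB i j, (hxpos j).le, hx_le_one j]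
      _ = (∑ i, ∑ j, B i j) + n * n := by
          simp [Finset.sum_add_distrib, Finset.sum_const, Finset.card_univ]
  choose xs lams hxs0 hxs1 hxseig hxsr hxsub using hstep
  -- compactness of simplex × interval
  set C : ℝ := (∑ i, ∑ j, B i j) + n * n with hC
  have hcomp : IsCompact (({x : Fin n → ℝ | (∀ i, 0 ≤ x i) ∧ ∑ i, x i = 1} : Set (Fin n → ℝ))
      ×ˢ Set.Icc r C) := (simplex_compact n).prod isCompact_Icc
  have hmem : ∀ k, (xs k, lams k) ∈ (({x : Fin n → ℝ | (∀ i, 0 ≤ x i) ∧ ∑ i, x i = 1} :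
      Set (Fin n → ℝ)) ×ˢ Set.Icc r C) := fun k =>
    ⟨⟨hxs0 k, hxs1 k⟩, hxsr k, hxsub k⟩
  obtain ⟨⟨x, lam⟩, ⟨⟨hx0, hx1⟩, hlamr, -⟩, φ, hφmono, hφtend⟩ := hcomp.tendsto_subseq hmem
  have hxt : Filter.Tendsto (fun k => xs (φ k)) Filter.atTop (nhds x) :=
    (continuous_fst.tendsto _).comp hφtend
  have hlt : Filter.Tendsto (fun k => lams (φ k)) Filter.atTop (nhds lam) :=
    (continuous_snd.tendsto _).comp hφtend
  refine ⟨x, lam, hx0, hx1, ?_, hlamr⟩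
  funext i
  have hxti : ∀ j, Filter.Tendsto (fun k => xs (φ k) j) Filter.atTop (nhds (x j)) := by
    intro j
    have := hxt; rw [tendsto_pi_nhds] at this; exact this j
  have hL : Filter.Tendsto (fun k => (Bp (φ k)).mulVec (xs (φ k)) i)
      Filter.atTop (nhds (B.mulVec x i)) := by
    simp only [Matrix.mulVec, dotProduct, hBp, Matrix.of_apply]
    refine tendsto_finset_sum _ fun j _ => ?_
    have h1 : Filter.Tendsto (fun k => B i j + 1/((φ k : ℝ)+1)) Filter.atTop (nhds (B i j)) := by
      have := (tendsto_one_div_add_atTop_nhds_zero_nat (𝕜 := ℝ)).comp hφmono.tendsto_atTop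
      have h2 : Filter.Tendsto (fun k => (1:ℝ)/((φ k : ℝ)+1)) Filter.atTop (nhds 0) := by
        simpa [Function.comp_def] using this
      simpa using Filter.Tendsto.const_add (B i j) h2
    exact h1.mul (hxti j)
  have hR : Filter.Tendsto (fun k => lams (φ k) * xs (φ k) i)
      Filter.atTop (nhds (lam * x i)) := hlt.mul (hxti i)
  have heq : ∀ k, (Bp (φ k)).mulVec (xs (φ k)) i = lams (φ k) * xs (φ k) i := by
    intro k
    have := hxseig (φ k)
    rw [this]; simp
  have : B.mulVec x i = lam * x i := by
    refine tendsto_nhds_unique ?_ hR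
    simpa only [heq] using hL
  simpa using this

lemma matrix_mem_spectrum_iff (M : Matrix (Fin n) (Fin n) ℂ) (μ : ℂ) :
    μ ∈ spectrum ℂ M ↔ ∃ z : Fin n → ℂ, z ≠ 0 ∧ M.mulVec z = μ • z := by
  rw [← AlgEquiv.spectrum_eq (Matrix.toLinAlgEquiv' :
      Matrix (Fin n) (Fin n) ℂ ≃ₐ[ℂ] ((Fin n → ℂ) →ₗ[ℂ] (Fin n → ℂ))) M,
    ← Module.End.hasEigenvalue_iff_mem_spectrum]
  constructor
  · intro h
    obtain ⟨z, hz⟩ := h.exists_hasEigenvector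
    refine ⟨z, hz.2, ?_⟩
    have := hz.apply_eq_smul
    rwa [Matrix.toLinAlgEquiv'_apply] at this
  · rintro ⟨z, hz0, hz⟩
    refine Module.End.hasEigenvalue_of_hasEigenvector (x := z) ⟨?_, hz0⟩
    rw [Module.End.mem_eigenspace_iff, Matrix.toLinAlgEquiv'_apply]
    exact hz


/-- If `A` is a real `n×n` matrix with nonnegative off-diagonal entries,
then there exists a nonzero vector `v ≥ 0` with `A v = s(A) v`, where `s(A)` is the
spectral bound of `A`. -/
theorem exists_nonneg_eigenvector_of_spectral_bound (n : ℕ) (hn : 0 < n)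
    (A : Matrix (Fin n) (Fin n) ℝ)
    (hoff : ∀ i j, i ≠ j → 0 ≤ A i j)
    (s : ℝ)
    (hs : IsGreatest {x : ℝ | ∃ μ ∈ spectrum ℂ (A.map (fun r => (r : ℂ))), x = μ.re} s) :
    ∃ v : Fin n → ℝ, v ≠ 0 ∧ (∀ i, 0 ≤ v i) ∧ A.mulVec v = s • v := by
  haveI : Nonempty (Fin n) := ⟨⟨0, hn⟩⟩
  obtain ⟨μ, hμspec, hμre⟩ := hs.1
  set M := A.map (fun r => (r : ℂ)) with hM
  obtain ⟨z, hz0, hz⟩ := (matrix_mem_spectrum_iff M μ).1 hμspec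
  set c : ℝ := ∑ i, |A i i| with hc
  have hdiag : ∀ i, 0 ≤ A i i + c := by
    intro i
    have h1 : |A i i| ≤ c :=
      Finset.single_le_sum (fun j _ => abs_nonneg (A j j)) (mem_univ i)
    have := neg_abs_le (A i i)
    linarith
  set B : Matrix (Fin n) (Fin n) ℝ := A + c • (1 : Matrix (Fin n) (Fin n) ℝ) with hBdef
  have hBij : ∀ i j, B i j = A i j + if i = j then c else 0 := by
    intro i j
    simp only [hBdef, Matrix.add_apply, Matrix.smul_apply, Matrix.one_apply, smul_eq_mul]
    split <;> simp
  have hBnn : ∀ i j, 0 ≤ B i j := by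
    intro i j
    rw [hBij]
    by_cases h : i = j
    · subst h; simpa using hdiag i
    · simpa [h] using hoff i j h
  set y : Fin n → ℝ := fun i => ‖z i‖ with hy
  have hy0 : ∀ i, 0 ≤ y i := fun i => norm_nonneg _
  have hyne : ∃ j, 0 < y j := by
    obtain ⟨j, hj⟩ := Function.ne_iff.1 hz0
    exact ⟨j, by simpa [hy] using norm_pos_iff.mpr hj⟩
  set r : ℝ := ‖μ + c‖ with hr
  have hAz : ∀ i, ∑ j, (A i j : ℂ) * z j = μ * z i := by
    intro i
    have := congrFun hz i
    simpa [Matrix.mulVec, dotProduct, hM, Matrix.map_apply] using this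
  have hBz : ∀ i, (∑ j, (B i j : ℂ) * z j) = (μ + c) * z i := by
    intro i
    calc ∑ j, (B i j : ℂ) * z j
        = ∑ j, ((A i j : ℂ) * z j + (if i = j then (c : ℂ) else 0) * z j) := by
          refine Finset.sum_congr rfl fun j _ => ?_
          rw [hBij i j]
          split <;> push_cast <;> ring
    _ = (∑ j, (A i j : ℂ) * z j) + ∑ j, (if i = j then (c : ℂ) else 0) * z j := by
          rw [Finset.sum_add_distrib]
    _ = μ * z i + (c : ℂ) * z i := by
          rw [hAz i]
          congr 1
          have : ∀ j, (if i = j then (c : ℂ) else 0) * z j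
              = if i = j then (c : ℂ) * z j else 0 := by
            intro j; split <;> simp
          simp only [this]
          rw [Finset.sum_ite_eq Finset.univ i (fun j => (c : ℂ) * z j)]
          simp
    _ = (μ + c) * z i := by ring
  have hry : ∀ i, r * y i ≤ B.mulVec y i := by
    intro i
    have h1 : r * y i = ‖(μ + c) * z i‖ := by rw [norm_mul]
    rw [h1, ← hBz i]
    calc ‖∑ j, (B i j : ℂ) * z j‖
        ≤ ∑ j, ‖(B i j : ℂ) * z j‖ := norm_sum_le _ _
    _ = ∑ j, B i j * y j := by
        refine Finset.sum_congr rfl fun j _ => ?_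
        rw [norm_mul, Complex.norm_real, Real.norm_eq_abs, abs_of_nonneg (hBnn i j)]
    _ = B.mulVec y i := rfl
  obtain ⟨x, lam, hx0, hx1, heig, hrlam⟩ := nonneg_perron hn B hBnn r y hy0 hyne hry
  have hxne : x ≠ 0 := by
    intro h
    rw [h] at hx1
    simp at hx1
  have hAx : A.mulVec x = (lam - c) • x := by
    have h1 : B.mulVec x = A.mulVec x + c • x := by
      simp [hBdef, Matrix.add_mulVec, Matrix.smul_mulVec, Matrix.one_mulVec]
    have h2 : A.mulVec x + c • x = lam • x := by rw [← h1, heig]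
    funext i
    have := congrFun h2 i
    simp only [Pi.add_apply, Pi.smul_apply, smul_eq_mul] at this ⊢
    linarith
  have hspec2 : ((lam - c : ℝ) : ℂ) ∈ spectrum ℂ M := by
    rw [matrix_mem_spectrum_iff]
    refine ⟨fun i => (x i : ℂ), ?_, ?_⟩
    · intro h
      apply hxne
      funext i
      have := congrFun h i
      simpa using this
    · funext i
      have hxeq := congrFun hAx i
      simp only [Pi.smul_apply, smul_eq_mul] at hxeq ⊢
      simp only [Matrix.mulVec, dotProduct, hM, Matrix.map_apply]
      have : ∑ j, (A i j : ℂ) * (x j : ℂ) = (((∑ j, A i j * x j : ℝ)) : ℂ) := by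
        push_cast; rfl
      rw [this]
      rw [show ∑ j, A i j * x j = A.mulVec x i from rfl, hxeq]
      push_cast; ring
  have hle : lam - c ≤ s := by
    have hmem : (lam - c) ∈ {x : ℝ | ∃ μ ∈ spectrum ℂ M, x = μ.re} :=
      ⟨((lam - c : ℝ) : ℂ), hspec2, by simp⟩
    exact hs.2 hmem
  have hge : s ≤ lam - c := by
    have h1 : (μ + (c : ℂ)).re ≤ r := Complex.re_le_norm _
    have h2 : (μ + (c : ℂ)).re = s + c := by
      rw [Complex.add_re, hμre]; simp
    linarith [hrlam]
  have hfinal : lam - c = s := le_antisymm hle hge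
  exact ⟨x, hxne, hx0, by rw [hAx, hfinal]⟩
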